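/- Let κ be an uncountable regular cardinal. If there is a superthin κ-Kurepa subtree S of ^{<κ}κ, then there is a κ-Kurepa subtree T of ^{<κ}κ such that the set [T] is a retract of ^κκ. Moreover, if S is pruned, then T can be chosen so that S ⊆ T. -/

import Mathlib

open Cardinal Set

noncomputable section

namespace GBaire

universe u

/-- The underlying well-ordered set of the cardinal `κ`, i.e. the type of ordinals `< κ`. -/
abbrev K (κ : Cardinal.{u}) : Type u := κ.ord.ToType

/-- The set `^{<κ}κ` of all functions from a proper initial segment of `κ` to `κ`. -/
abbrev PreFun (κ : Cardinal.{u}) : Type u := Σ α : K κ, ({β : K κ // β < α} → K κ)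

variable (κ : Cardinal.{u})

/-- The restriction `x ↾ α` of a function `x ∈ ^κκ` to the initial segment determined by `α`. -/
def resT (x : K κ → K κ) (α : K κ) : PreFun κ := ⟨α, fun β => x β.1⟩

/-- The restriction of `s ∈ ^{<κ}κ` to (the minimum of its domain and) `γ`.  When
`γ ≤ s.1` this is the restriction `s ↾ γ`; otherwise it equals `s`. -/
def cut (s : PreFun κ) (γ : K κ) : PreFun κ :=
  ⟨min γ s.1, fun β => s.2 ⟨β.1, lt_of_lt_of_le β.2 (min_le_right _ _)⟩⟩

/-- A subtree of `^{<κ}κ`: a set of elements of `^{<κ}κ` closed under restrictions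
to smaller ordinals. -/
def IsSubtree (T : Set (PreFun κ)) : Prop :=
  ∀ s ∈ T, ∀ γ : K κ, γ < s.1 → cut κ s γ ∈ T

/-- The `α`-th level `T(α)` of `T`. -/
def level (T : Set (PreFun κ)) (α : K κ) : Set (PreFun κ) := {s ∈ T | s.1 = α}

/-- The set `[T]` of cofinal branches of `T`, i.e. all `x ∈ ^κκ` all of whose
restrictions lie in `T`. -/
def branches (T : Set (PreFun κ)) : Set (K κ → K κ) := {x | ∀ α : K κ, resT κ x α ∈ T}

/-- `T` is a `κ`-Kurepa subtree of `^{<κ}κ`: a subtree all of whose levels are nonempty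
of cardinality `< κ` and with at least `κ⁺` many cofinal branches. -/
def IsKurepa (T : Set (PreFun κ)) : Prop :=
  IsSubtree κ T ∧ (∀ α : K κ, (level κ T α).Nonempty ∧ #(level κ T α) < κ) ∧
    Order.succ κ ≤ #(branches κ T)

/-- The basic open set `N_s = {x ∈ ^κκ | s ⊆ x}`. -/
def Nbhd (s : PreFun κ) : Set (K κ → K κ) := {x | resT κ x s.1 = s}

/-- The topology of the generalized Baire space `^κκ`, generated by the sets `N_s`. -/
def baire : TopologicalSpace (K κ → K κ) :=
  TopologicalSpace.generateFrom {U | ∃ s : PreFun κ, U = Nbhd κ s}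

/-- `X` is a continuous image of `^κκ`: there is a continuous surjection from `^κκ`
onto `X` (with the subspace topology). -/
def IsContImage (X : Set (K κ → K κ)) : Prop :=
  letI := baire κ
  ∃ f : (K κ → K κ) → X, Continuous f ∧ Function.Surjective f

/-- `X` is a retract of `^κκ`: there is a continuous `r : ^κκ → ^κκ` with range
contained in `X` that is the identity on `X`. -/
def IsRetract (X : Set (K κ → K κ)) : Prop :=
  letI := baire κ
  ∃ r : (K κ → K κ) → (K κ → K κ),
    Continuous r ∧ Set.range r ⊆ X ∧ ∀ x ∈ X, r x = x

/-- `y` is an isolated point of `Y ⊆ ^κκ`. -/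
def IsIsolatedIn (Y : Set (K κ → K κ)) (y : K κ → K κ) : Prop :=
  y ∈ Y ∧ ∃ α : K κ, Nbhd κ (resT κ y α) ∩ Y = {y}

/-- `T` is slim: `|T(α)| ≤ |α|` for all sufficiently large `α < κ`. -/
def IsSlim (T : Set (PreFun κ)) : Prop :=
  ∃ α₀ : K κ, ∀ α : K κ, α₀ ≤ α → #(level κ T α) ≤ #{β : K κ // β < α}

/-- `C ⊆ κ` is closed: it contains every least upper bound of a nonempty subset of `C`. -/
def ClosedIn (C : Set (K κ)) : Prop :=
  ∀ A ⊆ C, A.Nonempty → ∀ x : K κ, IsLUB A x → x ∈ C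

/-- `C ⊆ κ` is unbounded in `κ`. -/
def UnboundedIn (C : Set (K κ)) : Prop := ∀ x : K κ, ∃ y ∈ C, x < y

/-- `S ⊆ κ` is stationary in `κ`: it meets every closed unbounded subset of `κ`. -/
def Stationary (S : Set (K κ)) : Prop :=
  ∀ C : Set (K κ), ClosedIn κ C → UnboundedIn κ C → (S ∩ C).Nonempty

/-- `T` is stationary slim: `|T(α)| ≤ |α|` for stationarily many `α < κ`. -/
def StatSlim (T : Set (PreFun κ)) : Prop :=
  Stationary κ {α : K κ | #(level κ T α) ≤ #{β : K κ // β < α}}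

/-- `α` is a limit ordinal (as an element of `κ`): it is neither the least element
nor a successor. -/
def IsLimitElt (α : K κ) : Prop :=
  (∃ β : K κ, β < α) ∧ ∀ β : K κ, β < α → ∃ γ : K κ, β < γ ∧ γ < α

/-- The boundary `∂T` of a subtree `T`: the minimal elements of `^{<κ}κ \ T`. -/
def boundary (T : Set (PreFun κ)) : Set (PreFun κ) :=
  {t | t ∉ T ∧ ∀ γ : K κ, γ < t.1 → cut κ t γ ∈ T}

/-- `T` is superthin: for every limit ordinal `α < κ`, the set of elements of
`T ∪ ∂T` with domain `α` has cardinality `< κ`. -/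
def IsSuperthin (T : Set (PreFun κ)) : Prop :=
  ∀ α : K κ, IsLimitElt κ α → #{s ∈ T ∪ boundary κ T | s.1 = α} < κ

/-- `T` is pruned: every element of `T` has a proper extension in `T`. -/
def IsPruned (T : Set (PreFun κ)) : Prop :=
  ∀ s ∈ T, ∃ t ∈ T, s.1 < t.1 ∧ cut κ t s.1 = s

/-- `T` is `<κ`-closed: the union of every (strictly increasing with respect to proper
end-extension) sequence of elements of `T` indexed by an ordinal `< κ` again lies in `T`.
Here `u` is the union of the sequence `s` iff the domain of `u` is the least upper bound
of the domains of the `s ξ` and every `s ξ` is a restriction of `u`. -/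
def IsLtClosed (T : Set (PreFun κ)) : Prop :=
  ∀ (γ : K κ) (s : {ξ : K κ // ξ < γ} → PreFun κ),
    (∀ ξ ζ : {ξ : K κ // ξ < γ}, ξ < ζ → (s ξ).1 < (s ζ).1 ∧ cut κ (s ζ) (s ξ).1 = s ξ) →
    (∀ ξ, s ξ ∈ T) →
    ∀ u : PreFun κ, IsLUB (Set.range fun ξ => (s ξ).1) u.1 →
      (∀ ξ, cut κ u (s ξ).1 = s ξ) → u ∈ T

/-- `T` contains a Cantor subtree. -/
def HasCantorSubtree (T : Set (PreFun κ)) : Prop :=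
  ∃ (l : ℕ → K κ) (lam : K κ), StrictMono l ∧ IsLUB (Set.range l) lam ∧
    (level κ T lam).Nonempty ∧
    ∃ B ⊆ level κ T lam, ¬ B.Countable ∧
      ∀ n : ℕ, ((fun t => cut κ t (l n)) '' B).Countable

/-- proper end-extension on `^{<κ}κ`. -/
def pext (s t : PreFun κ) : Prop := s.1 < t.1 ∧ cut κ t s.1 = s

/-- A set `A ⊆ ^{<κ}κ`, regarded as a tree under proper end-extension, is trivially
coherent: it is order-isomorphic to a subtree of `^{<λ}2` (for `λ` its height) all of
whose elements `t` satisfy that `t⁻¹{0}` is finite.  (Here the comparison tree is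
realized as a subtree `U` of `^{<κ}κ` taking only the values `0` and `1`, i.e. values
with at most one predecessor, such that each `u ∈ U` takes the value `0`, i.e. the
value with no predecessor, only finitely often.) -/
def TriviallyCoherent (A : Set (PreFun κ)) : Prop :=
  ∃ U : Set (PreFun κ),
    IsSubtree κ U ∧
    (∀ u ∈ U, ∀ β : {b : K κ // b < u.1}, #{γ : K κ // γ < u.2 β} ≤ 1) ∧
    (∀ u ∈ U, {β : {b : K κ // b < u.1} | ¬ ∃ γ : K κ, γ < u.2 β}.Finite) ∧
    ∃ f : A → U, Function.Bijective f ∧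
      ∀ s t : A, pext κ s.1 t.1 ↔ pext κ (f s).1 (f t).1

/-- `T` is locally coherent: each of its proper initial segments `T ∩ ^{<α}κ` is
trivially coherent. -/
def LocallyCoherent (T : Set (PreFun κ)) : Prop :=
  ∀ α : K κ, TriviallyCoherent κ {s ∈ T | s.1 < α}

end GBaire

namespace GBaire

/-! ### Auxiliary material for Statement 8 -/

section Aux

variable {κ : Cardinal.{u}}

/-- extensionality for `PreFun` -/
theorem PreFun.ext2 {s t : PreFun κ} (h1 : s.1 = t.1)
    (h2 : ∀ β (hs : β < s.1) (ht : β < t.1), s.2 ⟨β, hs⟩ = t.2 ⟨β, ht⟩) : s = t := by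
  obtain ⟨a, f⟩ := s
  obtain ⟨b, g⟩ := t
  dsimp at h1
  subst h1
  simp only [Sigma.mk.inj_iff, heq_eq_eq, true_and]
  funext β
  exact h2 β.1 β.2 β.2

@[simp] theorem resT_fst (x : K κ → K κ) (α : K κ) : (resT κ x α).1 = α := rfl

theorem resT_eq_iff {x y : K κ → K κ} {α : K κ} :
    resT κ x α = resT κ y α ↔ ∀ β, β < α → x β = y β := by
  constructor
  · intro h β hβ
    have h2 : (fun β : {β : K κ // β < α} => x β.1) = fun β => y β.1 :=
      (Sigma.mk.inj_iff.1 h).2.eq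
    exact congrFun h2 ⟨β, hβ⟩
  · intro h
    exact PreFun.ext2 rfl fun β hs _ => h β hs

theorem resT_eq_of_le {x y : K κ → K κ} {α γ : K κ} (h : resT κ x γ = resT κ y γ)
    (hle : α ≤ γ) : resT κ x α = resT κ y α :=
  resT_eq_iff.2 fun β hβ => resT_eq_iff.1 h β (lt_of_lt_of_le hβ hle)

theorem cut_resT {x : K κ → K κ} {α γ : K κ} (h : γ ≤ α) :
    cut κ (resT κ x α) γ = resT κ x γ :=
  PreFun.ext2 (min_eq_left h) fun β hs ht => rfl

@[simp] theorem cut_fst (s : PreFun κ) (γ : K κ) : (cut κ s γ).1 = min γ s.1 := rfl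

variable (κ)

/-- The tree of restrictions of branches of `S`. -/
def Cset (S : Set (PreFun κ)) : Set (PreFun κ) :=
  {s | ∃ x ∈ branches κ S, resT κ x s.1 = s}

variable {κ}
variable {S : Set (PreFun κ)}

theorem Cset_subset (hsub : IsSubtree κ S) : Cset κ S ⊆ S := by
  rintro s ⟨x, hx, he⟩
  rw [← he]
  exact hx s.1

theorem resT_mem_Cset {x : K κ → K κ} (hx : x ∈ branches κ S) (α : K κ) :
    resT κ x α ∈ Cset κ S := ⟨x, hx, rfl⟩

theorem Cset_res_mem {x : K κ → K κ} {α γ : K κ} (h : resT κ x α ∈ Cset κ S)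
    (hle : γ ≤ α) : resT κ x γ ∈ Cset κ S := by
  obtain ⟨y, hy, hyx⟩ := h
  exact ⟨y, hy, resT_eq_of_le hyx hle⟩

/-- `x` is a branch of the branch-tree iff it is a branch of `S`. -/
theorem inC_iff {x : K κ → K κ} (hsub : IsSubtree κ S) :
    (∀ α, resT κ x α ∈ Cset κ S) ↔ x ∈ branches κ S :=
  ⟨fun h α => Cset_subset hsub (h α), fun h α => resT_mem_Cset h α⟩

variable (S) in
/-- the set of exit points -/
def exitSet (x : K κ → K κ) : Set (K κ) := {δ | resT κ x δ ∉ Cset κ S}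

theorem exitSet_nonempty {x : K κ → K κ} (h : ¬ ∀ α, resT κ x α ∈ Cset κ S) :
    (exitSet S x).Nonempty := by
  push_neg at h
  exact h

variable (S) in
/-- The exit point of `x`: the least `δ` such that `x ↾ δ` is not a restriction of
a branch of `S`. -/
def exitE (x : K κ → K κ) (h : ¬ ∀ α, resT κ x α ∈ Cset κ S) : K κ :=
  wellFounded_lt.min (exitSet S x) (exitSet_nonempty h)

theorem exitE_not_mem {x : K κ → K κ} (h : ¬ ∀ α, resT κ x α ∈ Cset κ S) :
    resT κ x (exitE S x h) ∉ Cset κ S :=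
  wellFounded_lt.min_mem (exitSet S x) (exitSet_nonempty h)

theorem mem_of_lt_exitE {x : K κ → K κ} (h : ¬ ∀ α, resT κ x α ∈ Cset κ S) {δ : K κ}
    (hδ : δ < exitE S x h) : resT κ x δ ∈ Cset κ S := by
  by_contra hc
  exact wellFounded_lt.not_lt_min (exitSet S x) hc hδ

theorem exitE_le {x : K κ → K κ} (h : ¬ ∀ α, resT κ x α ∈ Cset κ S) {δ : K κ}
    (hδ : resT κ x δ ∉ Cset κ S) : exitE S x h ≤ δ :=
  not_lt.1 fun hc => wellFounded_lt.not_lt_min (exitSet S x) hδ hc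

open scoped Classical in
variable (S) in
/-- The cut point: the predecessor of `exitE` if it exists, else `exitE` itself. -/
def cutpt (x : K κ → K κ) (h : ¬ ∀ α, resT κ x α ∈ Cset κ S) : K κ :=
  if h2 : ∃ β, β < exitE S x h ∧ ∀ ζ, β < ζ → exitE S x h ≤ ζ then h2.choose
  else exitE S x h

theorem cutpt_spec {x : K κ → K κ} (h : ¬ ∀ α, resT κ x α ∈ Cset κ S) :
    (cutpt S x h < exitE S x h ∧ ∀ ζ, cutpt S x h < ζ → exitE S x h ≤ ζ) ∨
    (cutpt S x h = exitE S x h ∧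
      ∀ β, β < exitE S x h → ∃ ζ, β < ζ ∧ ζ < exitE S x h) := by
  rw [cutpt]
  split_ifs with h2
  · exact Or.inl h2.choose_spec
  · push_neg at h2
    refine Or.inr ⟨rfl, fun β hβ => ?_⟩
    exact h2 β hβ

theorem cutpt_le {x : K κ → K κ} (h : ¬ ∀ α, resT κ x α ∈ Cset κ S) :
    cutpt S x h ≤ exitE S x h := by
  rcases cutpt_spec h with h' | h'
  · exact h'.1.le
  · exact h'.1.le

theorem exitE_le_of_cutpt_lt {x : K κ → K κ} (h : ¬ ∀ α, resT κ x α ∈ Cset κ S) {ζ : K κ}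
    (hζ : cutpt S x h < ζ) : exitE S x h ≤ ζ := by
  rcases cutpt_spec h with h' | h'
  · exact h'.2 ζ hζ
  · exact h'.1 ▸ hζ.le

theorem mem_of_lt_cutpt {x : K κ → K κ} (h : ¬ ∀ α, resT κ x α ∈ Cset κ S) {δ : K κ}
    (hδ : δ < cutpt S x h) : resT κ x δ ∈ Cset κ S :=
  mem_of_lt_exitE h (lt_of_lt_of_le hδ (cutpt_le h))

/-- Uniqueness of the "predecessor-or-self" specification. -/
theorem cutpt_unique {e c c' : K κ}
    (h : (c < e ∧ ∀ ζ, c < ζ → e ≤ ζ) ∨ (c = e ∧ ∀ β, β < e → ∃ ζ, β < ζ ∧ ζ < e))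
    (h' : (c' < e ∧ ∀ ζ, c' < ζ → e ≤ ζ) ∨ (c' = e ∧ ∀ β, β < e → ∃ ζ, β < ζ ∧ ζ < e)) :
    c = c' := by
  rcases h with ⟨hc1, hc2⟩ | ⟨hc1, hc2⟩ <;> rcases h' with ⟨hd1, hd2⟩ | ⟨hd1, hd2⟩
  · rcases lt_trichotomy c c' with hlt | heq | hgt
    · exact absurd (hc2 c' hlt) (not_le.2 hd1)
    · exact heq
    · exact absurd (hd2 c hgt) (not_le.2 hc1)
  · obtain ⟨ζ, hζ1, hζ2⟩ := hd2 c hc1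
    exact absurd (hc2 ζ hζ1) (not_le.2 hζ2)
  · obtain ⟨ζ, hζ1, hζ2⟩ := hc2 c' hd1
    exact absurd (hd2 ζ hζ1) (not_le.2 hζ2)
  · rw [hc1, hd1]

theorem cutpt_congr {x y : K κ → K κ} (hx : ¬ ∀ α, resT κ x α ∈ Cset κ S)
    (hy : ¬ ∀ α, resT κ y α ∈ Cset κ S) (he : exitE S x hx = exitE S y hy) :
    cutpt S x hx = cutpt S y hy :=
  cutpt_unique (he ▸ cutpt_spec hx) (cutpt_spec hy)

open scoped Classical in
variable (S) in
/-- The retraction map. -/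
def retr (z0 : K κ) (x : K κ → K κ) : K κ → K κ :=
  if h : ∀ α, resT κ x α ∈ Cset κ S then x
  else fun β => if β < cutpt S x h then x β else z0

theorem retr_of_inC {z0 : K κ} {x : K κ → K κ} (h : ∀ α, resT κ x α ∈ Cset κ S) :
    retr S z0 x = x := dif_pos h

theorem retr_of_not_inC {z0 : K κ} {x : K κ → K κ} (h : ¬ ∀ α, resT κ x α ∈ Cset κ S) :
    retr S z0 x = fun β => if β < cutpt S x h then x β else z0 := dif_neg h

variable (S) in
/-- The tree generated by all restrictions of values of `retr`. -/
def Tzero (z0 : K κ) : Set (PreFun κ) :=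
  {s | ∃ x, resT κ (retr S z0 x) s.1 = s}

theorem Tzero_subtree (z0 : K κ) : IsSubtree κ (Tzero S z0) := by
  rintro s ⟨x, he⟩ γ hγ
  have h1 : cut κ s γ = resT κ (retr S z0 x) γ := by
    rw [← he]
    exact cut_resT (le_of_lt hγ)
  exact ⟨x, by rw [h1]; rfl⟩

theorem exists_lt_exitE (hne : (branches κ S).Nonempty) {x : K κ → K κ}
    (h : ¬ ∀ α, resT κ x α ∈ Cset κ S) : ∃ β, β < exitE S x h := by
  by_contra hc
  push_neg at hc
  obtain ⟨b, hb⟩ := hne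
  apply exitE_not_mem h
  have heq : resT κ x (exitE S x h) = resT κ b (exitE S x h) :=
    PreFun.ext2 rfl fun β hs _ => absurd hs (not_lt.2 (hc β))
  rw [heq]
  exact resT_mem_Cset hb _

/-- Continuity criterion for the Baire topology. -/
theorem baire_continuous {r : (K κ → K κ) → K κ → K κ}
    (h : ∀ x α, ∃ γ, ∀ y, resT κ y γ = resT κ x γ → resT κ (r y) α = resT κ (r x) α) :
    @Continuous _ _ (baire κ) (baire κ) r := by
  letI := baire κ
  rw [baire, continuous_generateFrom_iff]
  rintro U ⟨s, rfl⟩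
  have hU : r ⁻¹' Nbhd κ s =
      ⋃₀ {V | (∃ t : PreFun κ, V = Nbhd κ t) ∧ V ⊆ r ⁻¹' Nbhd κ s} := by
    ext x
    constructor
    · intro hx
      obtain ⟨γ, hγ⟩ := h x s.1
      refine ⟨Nbhd κ (resT κ x γ), ⟨⟨_, rfl⟩, ?_⟩, ?_⟩
      · intro y hy
        have h2 : resT κ (r y) s.1 = resT κ (r x) s.1 := hγ y hy
        show resT κ (r y) s.1 = s
        rw [h2]
        exact hx
      · show resT κ x γ = resT κ x γ
        rfl
    · rintro ⟨V, ⟨_, hVsub⟩, hxV⟩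
      exact hVsub hxV
  rw [hU]
  exact isOpen_sUnion fun V hV =>
    TopologicalSpace.isOpen_generateFrom_of_mem hV.1

/-- The retraction is continuous in the sense of the criterion. -/
theorem retr_res (z0 : K κ) (x : K κ → K κ) (α : K κ) :
    ∃ γ, ∀ y, resT κ y γ = resT κ x γ →
      resT κ (retr S z0 y) α = resT κ (retr S z0 x) α := by
  by_cases hx : ∀ α, resT κ x α ∈ Cset κ S
  · refine ⟨α, fun y hy => ?_⟩
    rw [retr_of_inC hx]
    by_cases hy2 : ∀ α, resT κ y α ∈ Cset κ S
    · rw [retr_of_inC hy2]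
      exact hy
    · have hEgt : α < exitE S y hy2 := by
        by_contra hle
        push_neg at hle
        apply exitE_not_mem hy2
        rw [resT_eq_of_le hy hle]
        exact hx _
      have hcut : α ≤ cutpt S y hy2 := by
        by_contra hlt
        push_neg at hlt
        exact absurd (exitE_le_of_cutpt_lt hy2 hlt) (not_le.2 hEgt)
      rw [retr_of_not_inC hy2]
      refine resT_eq_iff.2 fun β hβ => ?_
      show (if β < cutpt S y hy2 then y β else z0) = x β
      rw [if_pos (lt_of_lt_of_le hβ hcut)]
      exact resT_eq_iff.1 hy β hβ
  · refine ⟨max (exitE S x hx) α, fun y hy => ?_⟩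
    have h1 : ∀ δ, δ ≤ max (exitE S x hx) α → resT κ y δ = resT κ x δ :=
      fun δ hδ => resT_eq_of_le hy hδ
    have hy2 : ¬ ∀ α, resT κ y α ∈ Cset κ S := by
      intro hAll
      apply exitE_not_mem hx
      rw [← h1 _ (le_max_left _ _)]
      exact hAll _
    have hee : exitE S y hy2 = exitE S x hx := by
      have hle : exitE S y hy2 ≤ exitE S x hx := by
        apply exitE_le hy2
        rw [h1 _ (le_max_left _ _)]
        exact exitE_not_mem hx
      refine le_antisymm hle ?_
      apply exitE_le hx
      rw [← h1 _ (hle.trans (le_max_left _ _))]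
      exact exitE_not_mem hy2
    have hcc : cutpt S y hy2 = cutpt S x hx := cutpt_congr hy2 hx hee
    rw [retr_of_not_inC hy2, retr_of_not_inC hx]
    refine resT_eq_iff.2 fun β hβ => ?_
    show (if β < cutpt S y hy2 then y β else z0) = if β < cutpt S x hx then x β else z0
    rw [hcc]
    by_cases hβc : β < cutpt S x hx
    · rw [if_pos hβc, if_pos hβc]
      exact resT_eq_iff.1 hy β (lt_of_lt_of_le hβ (le_max_right _ _))
    · rw [if_neg hβc, if_neg hβc]

/-- Branches of the enlarged tree are fixed by the retraction. -/
theorem retr_eq_self_of_branch (hκ : ℵ₀ ≤ κ) (hsub : IsSubtree κ S) {z0 : K κ}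
    {x : K κ → K κ} (hx : x ∈ branches κ (S ∪ Tzero S z0)) : retr S z0 x = x := by
  haveI := Cardinal.noMaxOrder hκ
  by_cases hC : ∀ α, resT κ x α ∈ Cset κ S
  · exact retr_of_inC hC
  · have hnb : x ∉ branches κ S := fun hb => hC fun α => resT_mem_Cset hb α
    obtain ⟨γ0, hγ0⟩ : ∃ γ0, resT κ x γ0 ∉ S := by
      by_contra hc
      push_neg at hc
      exact hnb hc
    have key : ∀ β, cutpt S x hC ≤ β → x β = z0 := by
      intro β hβ
      obtain ⟨γ', hγ'⟩ := exists_gt (max β γ0)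
      have hβγ : β < γ' := lt_of_le_of_lt (le_max_left _ _) hγ'
      have h0γ : γ0 < γ' := lt_of_le_of_lt (le_max_right _ _) hγ'
      rcases hx γ' with hS | hZ
      · exfalso
        have := hsub _ hS γ0 h0γ
        rw [cut_resT h0γ.le] at this
        exact hγ0 this
      · obtain ⟨w, hw⟩ := hZ
        have hagree : ∀ δ, δ ≤ γ' → resT κ (retr S z0 w) δ = resT κ x δ :=
          fun δ hδ => resT_eq_of_le hw hδ
        have hexlt : exitE S x hC ≤ γ' :=
          exitE_le_of_cutpt_lt hC (lt_of_le_of_lt hβ hβγ)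
        by_cases hw2 : ∀ α, resT κ w α ∈ Cset κ S
        · exfalso
          apply exitE_not_mem hC
          rw [← hagree _ hexlt, retr_of_inC hw2]
          exact hw2 _
        · by_cases hcase : cutpt S w hw2 ≤ β
          · have h2 : retr S z0 w β = x β :=
              resT_eq_iff.1 (hagree γ' le_rfl) β hβγ
            rw [retr_of_not_inC hw2] at h2
            rw [← h2]
            simp only [not_lt.2 hcase, if_false]
          · exfalso
            push_neg at hcase
            have hagree2 : ∀ δ, δ ≤ γ' → δ ≤ cutpt S w hw2 → resT κ w δ = resT κ x δ := by
              intro δ hd1 hd2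
              have h3 := hagree δ hd1
              rw [retr_of_not_inC hw2] at h3
              rw [← h3]
              exact resT_eq_iff.2 fun β' hβ' => (if_pos (lt_of_lt_of_le hβ' hd2)).symm
            have h4 : cutpt S w hw2 ≤ exitE S x hC := by
              by_contra hlt
              push_neg at hlt
              have heq := hagree2 _ hexlt hlt.le
              have h5 := mem_of_lt_cutpt hw2 hlt
              rw [heq] at h5
              exact exitE_not_mem hC h5
            have h5 : exitE S x hC ≤ cutpt S w hw2 :=
              exitE_le_of_cutpt_lt hC (lt_of_le_of_lt hβ hcase)
            have h6 : cutpt S w hw2 = exitE S x hC := le_antisymm h4 h5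
            rcases cutpt_spec hC with hsx | hsx
            · rcases cutpt_spec hw2 with hsw | hsw
              · apply exitE_not_mem hC
                have h7 := mem_of_lt_exitE hw2 hsw.1
                rw [hagree2 _ (h6 ▸ hexlt) le_rfl] at h7
                rw [← h6]
                exact h7
              · have h8 : cutpt S x hC < exitE S w hw2 := by
                  rw [← hsw.1, h6]
                  exact hsx.1
                obtain ⟨ζ, hζ1, hζ2⟩ := hsw.2 _ h8
                have h9 := hsx.2 ζ hζ1
                rw [← hsw.1, h6] at hζ2
                exact absurd h9 (not_le.2 hζ2)
            · have := lt_of_le_of_lt hβ hcase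
              rw [h6, ← hsx.1] at this
              exact lt_irrefl _ this
    rw [retr_of_not_inC hC]
    funext β
    by_cases hβ : β < cutpt S x hC
    · rw [if_pos hβ]
    · rw [if_neg hβ]
      exact (key β (not_lt.1 hβ)).symm

variable (S) in
/-- Nodes that are either restrictions of branches or limits of such. -/
def GoodT : Set (PreFun κ) :=
  {t | t ∈ Cset κ S ∨ (IsLimitElt κ t.1 ∧ ∀ γ, γ < t.1 → cut κ t γ ∈ Cset κ S)}

theorem resT_cutpt_mem_GoodT (hne : (branches κ S).Nonempty) {x : K κ → K κ}
    (h : ¬ ∀ α, resT κ x α ∈ Cset κ S) : resT κ x (cutpt S x h) ∈ GoodT S := by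
  rcases cutpt_spec h with hs | hs
  · exact Or.inl (mem_of_lt_exitE h hs.1)
  · refine Or.inr ⟨⟨?_, ?_⟩, ?_⟩
    · obtain ⟨β, hβ⟩ := exists_lt_exitE hne h
      exact ⟨β, show β < cutpt S x h from hs.1 ▸ hβ⟩
    · intro β hβ
      have hβ' : β < exitE S x h := hs.1 ▸ hβ
      obtain ⟨ζ, h1, h2⟩ := hs.2 β hβ'
      exact ⟨ζ, h1, show ζ < cutpt S x h from hs.1 ▸ h2⟩
    · intro γ hγ
      have hγ' : γ < cutpt S x h := hγ
      rw [cut_resT hγ'.le]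
      exact mem_of_lt_cutpt h hγ'

theorem mk_GoodT_level (hsub : IsSubtree κ S) (hlev : ∀ α : K κ, #(level κ S α) < κ)
    (hthin : IsSuperthin κ S) (α : K κ) : #{t ∈ GoodT S | t.1 = α} < κ := by
  by_cases hlim : IsLimitElt κ α
  · refine lt_of_le_of_lt (mk_le_mk_of_subset ?_) (hthin α hlim)
    rintro t ⟨ht, hα⟩
    refine ⟨?_, hα⟩
    rcases ht with ht | ht
    · exact Or.inl (Cset_subset hsub ht)
    · by_cases htS : t ∈ S
      · exact Or.inl htS
      · exact Or.inr ⟨htS, fun γ hγ => Cset_subset hsub (ht.2 γ hγ)⟩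
  · refine lt_of_le_of_lt (mk_le_mk_of_subset ?_) (hlev α)
    rintro t ⟨ht, hα⟩
    rcases ht with ht | ht
    · exact ⟨Cset_subset hsub ht, hα⟩
    · exact absurd (hα ▸ ht.1) hlim

theorem mk_GoodT_le (hκ : ℵ₀ < κ) (hreg : κ.IsRegular) (hsub : IsSubtree κ S)
    (hlev : ∀ α : K κ, #(level κ S α) < κ) (hthin : IsSuperthin κ S) (β : K κ) :
    #{t ∈ GoodT S | t.1 ≤ β} < κ := by
  haveI := Cardinal.noMaxOrder hκ.le
  obtain ⟨β', hβ'⟩ := exists_gt β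
  have hIic : #(Iic β) < κ :=
    lt_of_le_of_lt
      (mk_le_mk_of_subset fun γ hγ => lt_of_le_of_lt hγ hβ')
      (Cardinal.mk_Iio_ord_toType β')
  have hcover : {t ∈ GoodT S | t.1 ≤ β} =
      ⋃ i : Iic β, {t ∈ GoodT S | t.1 = i.1} := by
    ext t
    constructor
    · rintro ⟨ht, hle⟩
      exact Set.mem_iUnion.2 ⟨⟨t.1, hle⟩, ht, rfl⟩
    · intro ht
      obtain ⟨i, hti, htd⟩ := Set.mem_iUnion.1 ht
      exact ⟨hti, htd ▸ i.2⟩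
  rw [hcover]
  refine lt_of_le_of_lt Cardinal.mk_iUnion_le_sum_mk ?_
  exact Cardinal.sum_lt_of_isRegular hreg hIic fun i =>
    mk_GoodT_level hsub hlev hthin i.1

/-- extension of a node by a constant value -/
def fillz (z0 : K κ) (t : PreFun κ) : K κ → K κ :=
  fun β => if h : β < t.1 then t.2 ⟨β, h⟩ else z0

theorem level_Tzero_subset (hsub : IsSubtree κ S) (hne : (branches κ S).Nonempty)
    (z0 : K κ) (β : K κ) :
    level κ (Tzero S z0) β ⊆
      level κ S β ∪ (fun t => resT κ (fillz z0 t) β) '' {t ∈ GoodT S | t.1 ≤ β} := by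
  rintro s ⟨⟨x, hx⟩, hβ⟩
  have hs : s = resT κ (retr S z0 x) β := by rw [← hx, hβ]
  by_cases hC : ∀ α, resT κ x α ∈ Cset κ S
  · left
    rw [retr_of_inC hC] at hs
    exact ⟨hs ▸ Cset_subset hsub (hC β), hβ⟩
  · by_cases hab : cutpt S x hC ≤ β
    · right
      refine ⟨resT κ x (cutpt S x hC), ⟨resT_cutpt_mem_GoodT hne hC, hab⟩, ?_⟩
      rw [hs]
      refine (resT_eq_iff.2 fun γ hγ => ?_).symm
      rw [retr_of_not_inC hC]
      show fillz z0 (resT κ x (cutpt S x hC)) γ = if γ < cutpt S x hC then x γ else z0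
      by_cases hγc : γ < cutpt S x hC
      · rw [if_pos hγc]
        exact dif_pos (show γ < (resT κ x (cutpt S x hC)).1 from hγc)
      · rw [if_neg hγc]
        exact dif_neg (show ¬ γ < (resT κ x (cutpt S x hC)).1 from hγc)
    · left
      push_neg at hab
      have h1 : resT κ (retr S z0 x) β = resT κ x β := by
        refine resT_eq_iff.2 fun γ hγ => ?_
        rw [retr_of_not_inC hC]
        show (if γ < cutpt S x hC then x γ else z0) = x γ
        rw [if_pos (hγ.trans hab)]
      rw [h1] at hs
      exact ⟨hs ▸ Cset_subset hsub (mem_of_lt_cutpt hC hab), hβ⟩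

theorem mk_level_Tzero_lt (hκ : ℵ₀ < κ) (hreg : κ.IsRegular) (hsub : IsSubtree κ S)
    (hne : (branches κ S).Nonempty) (hlev : ∀ α : K κ, #(level κ S α) < κ)
    (hthin : IsSuperthin κ S) (z0 : K κ) (β : K κ) :
    #(level κ (Tzero S z0) β) < κ := by
  refine lt_of_le_of_lt (mk_le_mk_of_subset (level_Tzero_subset hsub hne z0 β)) ?_
  refine lt_of_le_of_lt (Cardinal.mk_union_le _ _) ?_
  refine Cardinal.add_lt_of_lt hκ.le (hlev β) ?_
  exact lt_of_le_of_lt Cardinal.mk_image_le (mk_GoodT_le hκ hreg hsub hlev hthin β)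

end Aux

/-- Let `κ` be an uncountable regular cardinal.  If there is a
superthin `κ`-Kurepa subtree `S` of `^{<κ}κ`, then there is a `κ`-Kurepa subtree `T` of
`^{<κ}κ` such that `[T]` is a retract of `^κκ`; moreover, if `S` is pruned, then `T` can
be chosen with `S ⊆ T`. -/
theorem retract_kurepa_of_superthin
    (κ : Cardinal.{u}) (hκ : ℵ₀ < κ) (hreg : κ.IsRegular)
    (S : Set (PreFun κ)) (hSK : IsKurepa κ S) (hSthin : IsSuperthin κ S) :
    (∃ T : Set (PreFun κ), IsKurepa κ T ∧ IsRetract κ (branches κ T)) ∧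
    (IsPruned κ S →
      ∃ T : Set (PreFun κ), IsKurepa κ T ∧ IsRetract κ (branches κ T) ∧ S ⊆ T) := by
  classical
  haveI hKne : Nonempty (K κ) := by
    rw [← Cardinal.mk_ne_zero_iff, Cardinal.mk_ord_toType]
    exact fun h => by simp [h] at hκ
  set z0 : K κ := Classical.arbitrary (K κ) with hz0
  set T : Set (PreFun κ) := S ∪ Tzero S z0 with hT
  obtain ⟨hsub, hlev, hbr⟩ := hSK
  have hne : (branches κ S).Nonempty := by
    rw [← Set.nonempty_coe_sort, ← Cardinal.mk_ne_zero_iff]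
    intro h0
    rw [h0] at hbr
    exact absurd (lt_of_lt_of_le (lt_of_le_of_lt κ.zero_le (Order.lt_succ κ)) hbr)
      (lt_irrefl 0)
  have hTsub : IsSubtree κ T := by
    intro s hs γ hγ
    rcases hs with hs | hs
    · exact Or.inl (hsub s hs γ hγ)
    · exact Or.inr (Tzero_subtree z0 s hs γ hγ)
  have hlevT : ∀ α : K κ, (level κ T α).Nonempty ∧ #(level κ T α) < κ := by
    intro α
    constructor
    · obtain ⟨s, hsS, hsα⟩ := (hlev α).1
      exact ⟨s, Or.inl hsS, hsα⟩
    · have hsubl : level κ T α ⊆ level κ S α ∪ level κ (Tzero S z0) α := by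
        rintro s ⟨hs, hα⟩
        rcases hs with hs | hs
        · exact Or.inl ⟨hs, hα⟩
        · exact Or.inr ⟨hs, hα⟩
      refine lt_of_le_of_lt (mk_le_mk_of_subset hsubl) ?_
      refine lt_of_le_of_lt (Cardinal.mk_union_le _ _) ?_
      exact Cardinal.add_lt_of_lt hκ.le ((hlev α).2)
        (mk_level_Tzero_lt hκ hreg hsub hne (fun β => (hlev β).2) hSthin z0 α)
  have hbrT : Order.succ κ ≤ #(branches κ T) := by
    refine hbr.trans (mk_le_mk_of_subset ?_)
    intro x hx α
    exact Or.inl (hx α)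
  have hret : IsRetract κ (branches κ T) := by
    refine ⟨retr S z0, ?_, ?_, ?_⟩
    · exact baire_continuous fun x α => retr_res z0 x α
    · rintro _ ⟨x, rfl⟩ α
      exact Or.inr ⟨x, rfl⟩
    · intro x hx
      exact retr_eq_self_of_branch hκ.le hsub hx
  have hK : IsKurepa κ T := ⟨hTsub, hlevT, hbrT⟩
  exact ⟨⟨T, hK, hret⟩, fun _ => ⟨T, hK, hret, Set.subset_union_left⟩⟩


end GBaire
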